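/- For the scalar Riccati equation φ' = −2Lφ − γ((1+ϱ)φ² + 1) with L ≥ 0, γ > 0, ϱ > 0, and initial value φ(0) = φ₀ > 0, the maximal time T* for which the solution satisfies φ(T*) = 0 is finite and given explicitly by: T* = (1/(γ·r))·(arctan(( (1+ϱ)φ₀ + L/γ )/r) − arctan((L/γ)/r)) when r² := (1+ϱ) − (L/γ)² > 0, where r = √((1+ϱ) − (L/γ)²). -/

import Mathlib

/-- Explicit formula for the maximal sampling period: the solution of the Riccati
equation `φ' = −2Lφ − γ((1+ϱ)φ² + 1)` with `φ(0) = φ₀ > 0` and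
`(1+ϱ)γ² > L²` first reaches zero exactly at
`T* = (1/(γr))(arctan(((1+ϱ)φ₀ + L/γ)/r) − arctan((L/γ)/r))`, where
`r = √((1+ϱ) − (L/γ)²)`; in particular `φ(T*) = 0` and `φ > 0` on `[0, T*)`. -/
theorem riccati_explicit_zero_time (L γ ϱ φ₀ r Tstar : ℝ)
    (hL : 0 ≤ L) (hγ : 0 < γ) (hϱ : 0 < ϱ) (hφ₀ : 0 < φ₀)
    (hdisc : L ^ 2 < (1 + ϱ) * γ ^ 2)
    (hr : r = Real.sqrt ((1 + ϱ) - (L / γ) ^ 2))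
    (hTstar : Tstar = (1 / (γ * r)) *
      (Real.arctan (((1 + ϱ) * φ₀ + L / γ) / r) - Real.arctan ((L / γ) / r)))
    (φ : ℝ → ℝ) (h0 : φ 0 = φ₀)
    (hode : ∀ τ ∈ Set.Icc 0 Tstar,
      HasDerivAt φ (-2 * L * φ τ - γ * ((1 + ϱ) * (φ τ) ^ 2 + 1)) τ) :
    φ Tstar = 0 ∧ ∀ τ ∈ Set.Ico 0 Tstar, 0 < φ τ := by
  have hp : (0:ℝ) < 1 + ϱ := by linarith
  have hγ' : γ ≠ 0 := ne_of_gt hγ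
  have hpos : (0:ℝ) < (1 + ϱ) - (L / γ) ^ 2 := by
    have hx : (L / γ) ^ 2 = L ^ 2 / γ ^ 2 := by field_simp
    rw [hx, sub_pos, div_lt_iff₀ (by positivity)]
    linarith
  have hrpos : 0 < r := by rw [hr]; exact Real.sqrt_pos.mpr hpos
  have hr2 : r ^ 2 = (1 + ϱ) - (L / γ) ^ 2 := by
    rw [hr, Real.sq_sqrt hpos.le]
  have hr' : r ≠ 0 := ne_of_gt hrpos
  set a : ℝ := L / γ with ha
  set g : ℝ → ℝ := fun τ => ((1 + ϱ) * φ τ + a) / r with hg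
  set h : ℝ → ℝ := fun τ => Real.arctan (g τ) + γ * r * τ with hh
  -- h has derivative 0 on [0, Tstar]
  have hderiv : ∀ τ ∈ Set.Icc 0 Tstar, HasDerivAt h 0 τ := by
    intro τ hτ
    have hφ' := hode τ hτ
    have hg' : HasDerivAt g
        (((1 + ϱ) * (-2 * L * φ τ - γ * ((1 + ϱ) * (φ τ) ^ 2 + 1))) / r) τ :=
      ((hφ'.const_mul (1 + ϱ)).add_const a).div_const r
    have harc := hg'.arctan
    have hlin : HasDerivAt (fun τ : ℝ => γ * r * τ) (γ * r) τ := by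
      simpa using (hasDerivAt_id τ).const_mul (γ * r)
    have hsum := harc.add hlin
    convert hsum using 1
    case e'_4 => rfl
    case e'_5 => rfl
    case e'_8 => rfl
    set x := φ τ with hx
    have h2L : (2:ℝ) * L = 2 * a * γ := by rw [ha]; field_simp
    have key : (1 + ϱ) * (-2 * L * x - γ * ((1 + ϱ) * x ^ 2 + 1))
        = -γ * (((1 + ϱ) * x + a) ^ 2 + r ^ 2) := by
      rw [hr2, ha]; field_simp; ring
    have hden : (0:ℝ) < r ^ 2 + ((1 + ϱ) * x + a) ^ 2 := by positivity
    rw [hg]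
    simp only
    rw [eq_comm]
    have h1g : 1 + (((1 + ϱ) * x + a) / r) ^ 2
        = (r ^ 2 + ((1 + ϱ) * x + a) ^ 2) / r ^ 2 := by field_simp
    rw [h1g, key]
    field_simp
    ring
  have hcont : ContinuousOn h (Set.Icc 0 Tstar) := fun τ hτ =>
    (hderiv τ hτ).continuousAt.continuousWithinAt
  have hconst : ∀ τ ∈ Set.Icc 0 Tstar, h τ = h 0 :=
    constant_of_has_deriv_right_zero hcont
      (fun τ hτ => (hderiv τ (Set.mem_Icc_of_Ico hτ)).hasDerivWithinAt)
  have hh0 : h 0 = Real.arctan (((1 + ϱ) * φ₀ + a) / r) := by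
    simp [hh, hg, h0]
  have harcmono : Real.arctan (a / r) < Real.arctan (((1 + ϱ) * φ₀ + a) / r) := by
    apply Real.arctan_strictMono
    have hlt : a < (1 + ϱ) * φ₀ + a := by nlinarith
    exact div_lt_div_of_pos_right hlt hrpos
  have hTnn : 0 ≤ Tstar := by
    rw [hTstar]
    apply mul_nonneg (by positivity)
    linarith
  -- value of γ r Tstar
  have hγrT : γ * r * Tstar
      = Real.arctan (((1 + ϱ) * φ₀ + a) / r) - Real.arctan (a / r) := by
    rw [hTstar, ha]; field_simp
  -- formula for arctan (g τ)
  have hformula : ∀ τ ∈ Set.Icc 0 Tstar,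
      Real.arctan (g τ) = Real.arctan (((1 + ϱ) * φ₀ + a) / r) - γ * r * τ := by
    intro τ hτ
    have := hconst τ hτ
    rw [hh0] at this
    simp only [hh] at this
    linarith
  constructor
  · -- φ Tstar = 0
    have hT := hformula Tstar ⟨hTnn, le_refl _⟩
    rw [hγrT] at hT
    have : Real.arctan (g Tstar) = Real.arctan (a / r) := by linarith
    have hgT : g Tstar = a / r := Real.arctan_injective this
    have : (1 + ϱ) * φ Tstar + a = a := by
      have := congrArg (fun y => y * r) hgT
      simpa [hg, div_mul_cancel₀, hr'] using this
    have h1 : (1 + ϱ) * φ Tstar = 0 := by linarith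
    rcases mul_eq_zero.mp h1 with h | h
    · exact absurd h (ne_of_gt hp)
    · exact h
  · -- positivity on [0, Tstar)
    intro τ hτ
    have hτ' : τ ∈ Set.Icc 0 Tstar := Set.mem_Icc_of_Ico hτ
    have hτT : τ < Tstar := hτ.2
    have hF := hformula τ hτ'
    have hlt : Real.arctan (a / r) < Real.arctan (g τ) := by
      rw [hF]
      have : γ * r * τ < γ * r * Tstar :=
        mul_lt_mul_of_pos_left hτT (by positivity)
      rw [hγrT] at this
      linarith
    have hglt : a / r < g τ := by
      by_contra hle
      push_neg at hle
      exact absurd (Real.arctan_strictMono.le_iff_le.mpr hle) (not_le.mpr hlt)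
    have : a < (1 + ϱ) * φ τ + a := by
      have := mul_lt_mul_of_pos_right hglt hrpos
      rwa [div_mul_cancel₀ _ hr', hg, div_mul_cancel₀ _ hr'] at this
    nlinarith
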